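/- arXiv:1205.6558 — 2 statements merged into one kernel-verified Lean document; each statement's English description precedes it below -/
import Mathlib

section
/- Let A, B be directed weighted graphs. Then contraction commutes with reduction: the simple-graph collapse of Â ∷ B̂ equals the simple-graph collapse of A ∷ B, i.e. for every pair of vertices v, v' in V_A Δ V_B, the sum over alternating paths π from v to v' in A□B of Π_e ω(e) equals the product-of-sums expression Σ over alternating edge-type sequences in Â□B̂, provided all sums are interpreted in [0,∞]. -/
open scoped ENNReal

/-- A directed weighted graph with a definite (finite) set of vertex locations. -/
structure EGraph (V : Type) where
  verts : Finset V
  E : Type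
  src : E → V
  tgt : E → V
  w : E → ℝ≥0∞
  src_mem : ∀ e, src e ∈ verts
  tgt_mem : ∀ e, tgt e ∈ verts

namespace EGraph

variable {V : Type} [DecidableEq V]

/-- source of an edge of the plugging `G □ H` -/
def psrc (G H : EGraph V) : G.E ⊕ H.E → V := Sum.elim G.src H.src

/-- target of an edge of the plugging `G □ H` -/
def ptgt (G H : EGraph V) : G.E ⊕ H.E → V := Sum.elim G.tgt H.tgt

/-- weight of an edge of the plugging `G □ H` -/
def pw (G H : EGraph V) : G.E ⊕ H.E → ℝ≥0∞ := Sum.elim G.w H.w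

/-- An alternating path in the plugging `G □ H`: a nonempty composable sequence of
colored edges whose consecutive edges have distinct colors. -/
structure AltPath (G H : EGraph V) where
  edges : List (G.E ⊕ H.E)
  ne : edges ≠ []
  chain : edges.Chain' (fun e f => ptgt G H e = psrc G H f ∧ e.isLeft ≠ f.isLeft)

variable {G H : EGraph V}

def AltPath.src (p : AltPath G H) : V := psrc G H (p.edges.head p.ne)
def AltPath.tgt (p : AltPath G H) : V := ptgt G H (p.edges.getLast p.ne)

noncomputable def AltPath.weight (p : AltPath G H) : ℝ≥0∞ :=
  (p.edges.map (pw G H)).prod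

/-- An alternating cycle: the target of the last edge is the source of the first one,
and moreover the colors of the last and first edges differ. -/
def AltPath.IsCycle (p : AltPath G H) : Prop :=
  p.tgt = p.src ∧ (p.edges.getLast p.ne).isLeft ≠ (p.edges.head p.ne).isLeft

/-- A list is primitive (a `1`-cycle) when it is not a proper power of a shorter list. -/
def PrimitiveList {α : Type*} (l : List α) : Prop :=
  ∀ (k : ℕ) (r : List α), l = (List.replicate k r).flatten → k = 1

def AltPath.IsOneCycle (p : AltPath G H) : Prop := p.IsCycle ∧ PrimitiveList p.edges

/-- Equivalence of alternating 1-cycles up to cyclic permutation. -/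
def cycSetoid (G H : EGraph V) : Setoid {p : AltPath G H // p.IsOneCycle} where
  r p q := ∃ k, q.1.edges = p.1.edges.rotate k
  iseqv := by
    constructor
    · exact fun p => ⟨0, (p.1.edges.rotate_zero).symm⟩
    · rintro p q ⟨k, hk⟩
      refine ⟨p.1.edges.length * (k + 1) - k, ?_⟩
      rw [hk, List.rotate_rotate]
      rcases Nat.eq_zero_or_pos p.1.edges.length with h0 | hpos
      · rw [List.length_eq_zero_iff] at h0
        simp [h0]
      · have hkle : k ≤ p.1.edges.length * (k + 1) := by nlinarith
        rw [Nat.add_sub_cancel' hkle, List.rotate_length_mul]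
    · rintro p q r ⟨k, hk⟩ ⟨m, hm⟩
      exact ⟨k + m, by rw [hm, hk, List.rotate_rotate]⟩

/-- The set of alternating 1-circuits between `G` and `H`: alternating 1-cycles up to
cyclic permutation. -/
def Circ (G H : EGraph V) := Quotient (cycSetoid G H)

/-- The weight of a circuit. -/
noncomputable def cweight {G H : EGraph V} : Circ G H → ℝ≥0∞ :=
  Quotient.lift (fun p => p.1.weight)
    (by
      rintro p q ⟨k, hk⟩
      show p.1.weight = q.1.weight
      unfold AltPath.weight
      rw [hk]
      exact (((p.1.edges.map (pw G H)).rotate_perm k).prod_eq).symm.trans (by rw [List.map_rotate]))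

/-- `-log(1-x)`, valued in `[0,∞]`, with the convention `log 0 = -∞`. -/
noncomputable def mval (x : ℝ≥0∞) : ℝ≥0∞ :=
  if 1 ≤ x then ⊤ else ENNReal.ofReal (-Real.log (1 - x.toReal))

/-- The measurement `⟪G,H⟫ = Σ_{π ∈ C(G,H)} -log(1-ω(π))`. -/
noncomputable def meas (G H : EGraph V) : ℝ≥0∞ := ∑' c : Circ G H, mval (cweight c)

/-- The extended measurement value `Σ_{k ≥ 1} x^k / k`. -/
noncomputable def mvalExt (x : ℝ≥0∞) : ℝ≥0∞ := ∑' k : ℕ, x ^ (k + 1) / (k + 1)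

/-- The measurement extended to arbitrary weights. -/
noncomputable def measExt (G H : EGraph V) : ℝ≥0∞ := ∑' c : Circ G H, mvalExt (cweight c)

/-- The union of two graphs: union of the vertices, disjoint union of the edges. -/
def union (G H : EGraph V) : EGraph V where
  verts := G.verts ∪ H.verts
  E := G.E ⊕ H.E
  src := psrc G H
  tgt := ptgt G H
  w := pw G H
  src_mem := by
    rintro (e | e)
    · exact Finset.mem_union_left _ (G.src_mem e)
    · exact Finset.mem_union_right _ (H.src_mem e)
  tgt_mem := by
    rintro (e | e)
    · exact Finset.mem_union_left _ (G.tgt_mem e)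
    · exact Finset.mem_union_right _ (H.tgt_mem e)

/-- The reduction `G ∷ H`: vertices the symmetric difference, edges the alternating
paths with endpoints in the symmetric difference, weighted multiplicatively. -/
noncomputable def reduct (G H : EGraph V) : EGraph V where
  verts := symmDiff G.verts H.verts
  E := {p : AltPath G H //
        p.src ∈ symmDiff G.verts H.verts ∧ p.tgt ∈ symmDiff G.verts H.verts}
  src := fun p => p.1.src
  tgt := fun p => p.1.tgt
  w := fun p => p.1.weight
  src_mem := fun p => p.2.1
  tgt_mem := fun p => p.2.2

/-- The collapsed (simple) graph `Ĝ`, with weights the sums of the weights of parallel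
edges. -/
noncomputable def adj (G : EGraph V) (v u : V) : ℝ≥0∞ :=
  ∑' e : {e : G.E // G.src e = v ∧ G.tgt e = u}, G.w e.1

noncomputable def collapse (G : EGraph V) : EGraph V where
  verts := G.verts
  E := {p : V × V // ∃ e : G.E, G.src e = p.1 ∧ G.tgt e = p.2}
  src := fun p => p.1.1
  tgt := fun p => p.1.2
  w := fun p => adj G p.1.1 p.1.2
  src_mem := fun p => by obtain ⟨e, he, _⟩ := p.2; show p.1.1 ∈ G.verts; rw [← he]; exact G.src_mem e
  tgt_mem := fun p => by obtain ⟨e, _, he⟩ := p.2; show p.1.2 ∈ G.verts; rw [← he]; exact G.tgt_mem e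

end EGraph

open EGraph

section Aux

variable {V : Type} [DecidableEq V]

/-- relation between consecutive edges of an alternating path -/
def EdgeRel (G H : EGraph V) : (G.E ⊕ H.E) → (G.E ⊕ H.E) → Prop :=
  fun e f => ptgt G H e = psrc G H f ∧ e.isLeft ≠ f.isLeft

/-- a list of colored edges forming an alternating path from `v` to `v'` -/
abbrev Good (G H : EGraph V) (v v' : V) (l : List (G.E ⊕ H.E)) : Prop :=
  l ≠ [] ∧ l.Chain' (EdgeRel G H) ∧
    l.head?.map (psrc G H) = some v ∧ l.getLast?.map (ptgt G H) = some v'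

/-- the edges of the reduction from `v` to `v'` are the good lists -/
def pathsEquiv (G H : EGraph V) (v v' : V)
    (hv : v ∈ symmDiff G.verts H.verts) (hv' : v' ∈ symmDiff G.verts H.verts) :
    {e : (reduct G H).E // (reduct G H).src e = v ∧ (reduct G H).tgt e = v'} ≃
      {l : List (G.E ⊕ H.E) // Good G H v v' l} where
  toFun p := ⟨p.1.1.edges, p.1.1.ne, p.1.1.chain, by
      rw [List.head?_eq_head p.1.1.ne]
      exact congrArg some p.2.1, by
      rw [List.getLast?_eq_getLast p.1.1.ne]
      exact congrArg some p.2.2⟩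
  invFun l := by
    have hsrc : psrc G H (l.1.head l.2.1) = v := by
      have h := l.2.2.2.1
      rw [List.head?_eq_head l.2.1] at h
      simpa using h
    have htgt : ptgt G H (l.1.getLast l.2.1) = v' := by
      have h := l.2.2.2.2
      rw [List.getLast?_eq_getLast l.2.1] at h
      simpa using h
    exact ⟨⟨⟨l.1, l.2.1, l.2.2.1⟩, by
      show psrc G H _ ∈ _ ∧ ptgt G H _ ∈ _
      exact ⟨by rw [hsrc]; exact hv, by rw [htgt]; exact hv'⟩⟩, hsrc, htgt⟩
  left_inv p := by
    obtain ⟨⟨⟨edges, ne, ch⟩, hm⟩, hc⟩ := p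
    rfl
  right_inv l := rfl

lemma adj_reduct_eq (G H : EGraph V) (v v' : V)
    (hv : v ∈ symmDiff G.verts H.verts) (hv' : v' ∈ symmDiff G.verts H.verts) :
    adj (reduct G H) v v' =
      ∑' l : {l : List (G.E ⊕ H.E) // Good G H v v' l}, (l.1.map (pw G H)).prod := by
  unfold adj
  rw [← Equiv.tsum_eq (pathsEquiv G H v v' hv hv') fun l => (l.1.map (pw G H)).prod]
  exact tsum_congr fun p => rfl

variable (A B : EGraph V)

/-- the shadow of an edge of `A □ B` in `Â □ B̂` -/
def sh : A.E ⊕ B.E → (collapse A).E ⊕ (collapse B).E :=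
  Sum.map (fun e => ⟨(A.src e, A.tgt e), e, rfl, rfl⟩)
    (fun e => ⟨(B.src e, B.tgt e), e, rfl, rfl⟩)

lemma psrc_sh (e : A.E ⊕ B.E) :
    psrc (collapse A) (collapse B) (sh A B e) = psrc A B e := by cases e <;> rfl

lemma ptgt_sh (e : A.E ⊕ B.E) :
    ptgt (collapse A) (collapse B) (sh A B e) = ptgt A B e := by cases e <;> rfl

lemma isLeft_sh (e : A.E ⊕ B.E) : (sh A B e).isLeft = e.isLeft := by cases e <;> rfl

lemma rel_sh : (fun a b => EdgeRel (collapse A) (collapse B) (sh A B a) (sh A B b)) = EdgeRel A B := by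
  funext a b
  simp only [EdgeRel, psrc_sh, ptgt_sh, isLeft_sh]

lemma good_map_sh (v v' : V) (l : List (A.E ⊕ B.E)) :
    Good (collapse A) (collapse B) v v' (l.map (sh A B)) ↔ Good A B v v' l := by
  have h1 : psrc (collapse A) (collapse B) ∘ sh A B = psrc A B := funext (psrc_sh A B)
  have h2 : ptgt (collapse A) (collapse B) ∘ sh A B = ptgt A B := funext (ptgt_sh A B)
  simp only [Good, ne_eq, List.map_eq_nil_iff, List.Chain', List.isChain_map, rel_sh,
    List.head?_map, List.getLast?_map, Option.map_map, h1, h2]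

/-- the weight of a collapsed edge is the total weight of its fiber -/
def eL (f : (collapse A).E) : {e : A.E // A.src e = f.1.1 ∧ A.tgt e = f.1.2} ≃
    {x : A.E ⊕ B.E // sh A B x = Sum.inl f} :=
      { toFun := fun e => ⟨Sum.inl e.1,
          congrArg Sum.inl (Subtype.ext (Prod.ext e.2.1 e.2.2))⟩
        invFun := fun x => match x with
          | ⟨Sum.inl e, h⟩ => ⟨e, by
              have h' : (⟨(A.src e, A.tgt e), e, rfl, rfl⟩ : (collapse A).E) = f :=
                Sum.inl.inj h
              exact ⟨congrArg (fun t => t.1.1) h', congrArg (fun t => t.1.2) h'⟩⟩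
          | ⟨Sum.inr e, h⟩ => absurd h (by intro h'; cases h')
        left_inv := fun e => rfl
        right_inv := fun x => by
          rcases x with ⟨x | x, h⟩
          · rfl
          · exact absurd h (by intro h'; cases h') }

def eR (f : (collapse B).E) : {e : B.E // B.src e = f.1.1 ∧ B.tgt e = f.1.2} ≃
    {x : A.E ⊕ B.E // sh A B x = Sum.inr f} :=
      { toFun := fun e => ⟨Sum.inr e.1,
          congrArg Sum.inr (Subtype.ext (Prod.ext e.2.1 e.2.2))⟩
        invFun := fun x => match x with
          | ⟨Sum.inr e, h⟩ => ⟨e, by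
              have h' : (⟨(B.src e, B.tgt e), e, rfl, rfl⟩ : (collapse B).E) = f :=
                Sum.inr.inj h
              exact ⟨congrArg (fun t => t.1.1) h', congrArg (fun t => t.1.2) h'⟩⟩
          | ⟨Sum.inl e, h⟩ => absurd h (by intro h'; cases h')
        left_inv := fun e => rfl
        right_inv := fun x => by
          rcases x with ⟨x | x, h⟩
          · exact absurd h (by intro h'; cases h')
          · rfl }

lemma pw_collapse (m : (collapse A).E ⊕ (collapse B).E) :
    pw (collapse A) (collapse B) m = ∑' x : {x : A.E ⊕ B.E // sh A B x = m}, pw A B x.1 := by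
  cases m with
  | inl f =>
    show adj A f.1.1 f.1.2 = _
    unfold adj
    rw [← Equiv.tsum_eq (eL A B f) fun x => pw A B x.1]
    exact tsum_congr fun e => rfl
  | inr f =>
    show adj B f.1.1 f.1.2 = _
    unfold adj
    rw [← Equiv.tsum_eq (eR A B f) fun x => pw A B x.1]
    exact tsum_congr fun e => rfl

def fibConsEquiv (f : (collapse A).E ⊕ (collapse B).E)
    (m : List ((collapse A).E ⊕ (collapse B).E)) :
    ({x : A.E ⊕ B.E // sh A B x = f} × {l : List (A.E ⊕ B.E) // l.map (sh A B) = m}) ≃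
      {l : List (A.E ⊕ B.E) // l.map (sh A B) = f :: m} where
  toFun p := ⟨p.1.1 :: p.2.1, by simp [p.1.2, p.2.2]⟩
  invFun l := match l with
    | ⟨[], h⟩ => absurd h (by simp)
    | ⟨a :: t, h⟩ => ⟨⟨a, by simpa using congrArg List.head? h⟩,
        ⟨t, by simpa using congrArg List.tail h⟩⟩
  left_inv p := rfl
  right_inv l := by
    rcases l with ⟨_ | ⟨a, t⟩, h⟩
    · exact absurd h (by simp)
    · rfl

/-- distributivity: the weight of a collapsed path is the total weight of its fiber -/
lemma prod_fib (m : List ((collapse A).E ⊕ (collapse B).E)) :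
    (m.map (pw (collapse A) (collapse B))).prod =
      ∑' l : {l : List (A.E ⊕ B.E) // l.map (sh A B) = m}, (l.1.map (pw A B)).prod := by
  induction m with
  | nil =>
    have huniq : ∀ l' : {l : List (A.E ⊕ B.E) // l.map (sh A B) = []},
        l' = ⟨[], rfl⟩ := fun l' => Subtype.ext (List.map_eq_nil_iff.mp l'.2)
    rw [tsum_eq_single (⟨[], rfl⟩ : {l : List (A.E ⊕ B.E) // l.map (sh A B) = []})
      (fun b hb => absurd (huniq b) hb)]
    rfl
  | cons f m ih =>
    calc ((f :: m).map (pw (collapse A) (collapse B))).prod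
        = pw (collapse A) (collapse B) f * (m.map (pw (collapse A) (collapse B))).prod := by
          simp
      _ = (∑' x : {x : A.E ⊕ B.E // sh A B x = f}, pw A B x.1) *
            ∑' l : {l : List (A.E ⊕ B.E) // l.map (sh A B) = m}, (l.1.map (pw A B)).prod := by
          rw [pw_collapse, ih]
      _ = ∑' p : ({x : A.E ⊕ B.E // sh A B x = f} ×
            {l : List (A.E ⊕ B.E) // l.map (sh A B) = m}),
            pw A B p.1.1 * (p.2.1.map (pw A B)).prod := by
          rw [← ENNReal.tsum_mul_right, ENNReal.tsum_prod']
          exact tsum_congr fun x => ENNReal.tsum_mul_left.symm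
      _ = ∑' l : {l : List (A.E ⊕ B.E) // l.map (sh A B) = f :: m},
            (l.1.map (pw A B)).prod :=
          Equiv.tsum_eq (fibConsEquiv A B f m) fun l => (l.1.map (pw A B)).prod

def bigEquiv (v v' : V) :
    (Σ m : {m : List ((collapse A).E ⊕ (collapse B).E) //
        Good (collapse A) (collapse B) v v' m},
      {l : List (A.E ⊕ B.E) // l.map (sh A B) = m.1}) ≃
      {l : List (A.E ⊕ B.E) // Good A B v v' l} where
  toFun x := ⟨x.2.1, (good_map_sh A B v v' x.2.1).mp (by rw [x.2.2]; exact x.1.2)⟩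
  invFun l := ⟨⟨l.1.map (sh A B), (good_map_sh A B v v' l.1).mpr l.2⟩, ⟨l.1, rfl⟩⟩
  left_inv x := by
    obtain ⟨⟨m, hm⟩, l, hl⟩ := x
    have hl' : List.map (sh A B) l = m := hl
    refine Sigma.ext (Subtype.ext hl') ?_
    exact (Subtype.heq_iff_coe_eq fun t => by simp [hl']).mpr rfl
  right_inv l := rfl

end Aux


/-- Contraction commutes with reduction: `(Â ∷ B̂)^ = (A ∷ B)^`. The collapsed
reductions have the same vertices, and for every pair of vertices `v, v'` in
`V_A Δ V_B` the total weight of the alternating paths from `v` to `v'` in `A □ B`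
equals the corresponding total weight in `Â □ B̂` (sums taken in `[0,∞]`). -/
theorem stmt7 {V : Type} [DecidableEq V] (A B : EGraph V)
    [Countable A.E] [Countable B.E] :
    (reduct A B).verts = (reduct (collapse A) (collapse B)).verts ∧
    ∀ v v', v ∈ symmDiff A.verts B.verts → v' ∈ symmDiff A.verts B.verts →
      adj (reduct A B) v v' = adj (reduct (collapse A) (collapse B)) v v' := by
  refine ⟨rfl, fun v v' hv hv' => ?_⟩
  rw [adj_reduct_eq A B v v' hv hv',
    adj_reduct_eq (collapse A) (collapse B) v v' hv hv']
  rw [← Equiv.tsum_eq (bigEquiv A B v v') fun l => (l.1.map (pw A B)).prod]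
  rw [ENNReal.tsum_sigma']
  exact tsum_congr fun m => ((prod_fib A B m.1).symm)
end

section
/- (Mix rule) If a ⊥ b and c ⊥ d are projects such that the carrier of a (= carrier of b) is disjoint from the carrier of c (= carrier of d), then a⊗c ⊥ b⊗d. Consequently A⊗B ⊆ A⅋B := (A^⊥ ⊗ B^⊥)^⊥ for conducts A, B of disjoint carriers. -/
open scoped ENNReal

open EGraph

variable {V : Type} [DecidableEq V]

private lemma list_prod_pos {l : List ℝ≥0∞} (h : ∀ x ∈ l, 0 < x) : 0 < l.prod := by
  induction l with
  | nil => simp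
  | cons a t ih =>
    rw [List.prod_cons]
    exact ENNReal.mul_pos (h a (List.mem_cons_self)).ne'
      (ih fun x hx => h x (List.mem_cons_of_mem _ hx)).ne'

private lemma list_prod_le_one {l : List ℝ≥0∞} (h : ∀ x ∈ l, x ≤ 1) : l.prod ≤ 1 := by
  induction l with
  | nil => simp
  | cons a t ih =>
    rw [List.prod_cons]
    exact mul_le_one' (h a (List.mem_cons_self))
      (ih fun x hx => h x (List.mem_cons_of_mem _ hx))

/-- A project: a wager together with a weighted directed graph whose weights lie in
`(0,1]`. -/
structure Project (V : Type) where
  wager : ℝ≥0∞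
  graph : EGraph V
  wpos : ∀ e, 0 < graph.w e
  wle : ∀ e, graph.w e ≤ 1

namespace Project

def carrier (p : Project V) : Finset V := p.graph.verts

/-- The measurement `⟪a,b⟫ = a + b + ⟪A,B⟫` of the interaction of two projects. -/
noncomputable def pmeas (p q : Project V) : ℝ≥0∞ := p.wager + q.wager + meas p.graph q.graph

/-- Orthogonality: the measurement is neither `0` nor `∞`. -/
def orth (p q : Project V) : Prop := pmeas p q ≠ 0 ∧ pmeas p q ≠ ⊤

/-- Tensor product of projects. -/
noncomputable def tensor (p q : Project V) : Project V where
  wager := pmeas p q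
  graph := union p.graph q.graph
  wpos := by rintro (e | e); exacts [p.wpos e, q.wpos e]
  wle := by rintro (e | e); exacts [p.wle e, q.wle e]

/-- The cut of two projects (meaningful when `⟪p,q⟫ ≠ ∞`). -/
noncomputable def cut (p q : Project V) : Project V where
  wager := pmeas p q
  graph := reduct p.graph q.graph
  wpos := by
    rintro ⟨e, -⟩
    refine list_prod_pos ?_
    intro x hx
    obtain ⟨d, -, rfl⟩ := List.mem_map.1 hx
    rcases d with d | d
    exacts [p.wpos d, q.wpos d]
  wle := by
    rintro ⟨e, -⟩
    refine list_prod_le_one ?_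
    intro x hx
    obtain ⟨d, -, rfl⟩ := List.mem_map.1 hx
    rcases d with d | d
    exacts [p.wle d, q.wle d]

end Project

open Project

/-- The orthogonal of a set of projects, relative to a carrier `X`. -/
def perpOn (X : Finset V) (S : Set (Project V)) : Set (Project V) :=
  {q | q.carrier = X ∧ ∀ p ∈ S, orth p q}

/-- A conduct of carrier `X`: a nonempty set of projects of carrier `X` equal to its
biorthogonal. -/
structure IsConduct (X : Finset V) (S : Set (Project V)) : Prop where
  nonempty : S.Nonempty
  carrier_eq : ∀ p ∈ S, p.carrier = X
  biorth : S = perpOn X (perpOn X S)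

/-- `A ⊙ B`: the set of tensor products of members. -/
def setTens (A B : Set (Project V)) : Set (Project V) :=
  {r | ∃ a ∈ A, ∃ b ∈ B, r = a.tensor b}

/-- The tensor product of conducts: `A ⊗ B = (A ⊙ B)^⊥⊥`. -/
def tensConduct (X Y : Finset V) (A B : Set (Project V)) : Set (Project V) :=
  perpOn (X ∪ Y) (perpOn (X ∪ Y) (setTens A B))

/-- The linear implication `A ⊸ B = {f | ∀ a ∈ A, f ∷ a is defined and lies in B}`. -/
def limp (X Y : Finset V) (A B : Set (Project V)) : Set (Project V) :=
  {f | f.carrier = X ∪ Y ∧ ∀ a ∈ A, pmeas f a ≠ ⊤ ∧ f.cut a ∈ B}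

/-- The trace of (the collapse of) a graph. -/
noncomputable def gtrace (G : EGraph V) : ℝ≥0∞ := ∑ v ∈ G.verts, adj G v v

/-- The collapsed graph `Ĝ` is symmetric. -/
def SymmAdj (G : EGraph V) : Prop := ∀ v u, adj G v u = adj G u v

/-- `Ĝ³ = Ĝ`: the (adjacency matrix of the) graph of paths of length 3 in `Ĝ`
coincides with `Ĝ`. -/
def CubeAdj (G : EGraph V) : Prop :=
  ∀ v u, (∑ u₁ ∈ G.verts, ∑ u₂ ∈ G.verts, adj G v u₁ * adj G u₁ u₂ * adj G u₂ u) = adj G v u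

/-- A successful project: zero wager, collapsed graph symmetric, cube-idempotent and
traceless. -/
def Successful (p : Project V) : Prop :=
  p.wager = 0 ∧ SymmAdj p.graph ∧ CubeAdj p.graph ∧ gtrace p.graph = 0

/-- The collapsed graph is a disjoint union of weight-1 transpositions. -/
def IsDUT (G : EGraph V) : Prop :=
  (∀ v u, adj G v u ≠ 0 → adj G v u = 1) ∧
  (∀ v u, adj G v u = adj G u v) ∧
  (∀ v u u', adj G v u ≠ 0 → adj G v u' ≠ 0 → u = u') ∧
  (∀ v v' u, adj G v u ≠ 0 → adj G v' u ≠ 0 → v = v') ∧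
  (∀ v, adj G v v = 0)

/-- Isomorphism of located graphs: same vertices, and a weight- and endpoint-preserving
bijection of the edges. -/
def EGraph.IsIso (G H : EGraph V) : Prop :=
  G.verts = H.verts ∧ ∃ e : G.E ≃ H.E,
    (∀ x, H.src (e x) = G.src x) ∧ (∀ x, H.tgt (e x) = G.tgt x) ∧ (∀ x, H.w (e x) = G.w x)

/-- Equality of projects up to graph isomorphism. -/
def Project.Equiv (p q : Project V) : Prop :=
  p.wager = q.wager ∧ EGraph.IsIso p.graph q.graph

/-! ### Auxiliary development for the Mix rule -/

section MixAux

open List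

private lemma tsum_sum_type' {α β : Type} (f : α ⊕ β → ℝ≥0∞) :
    ∑' x, f x = ∑' a, f (Sum.inl a) + ∑' b, f (Sum.inr b) := by
  have hc : (Set.range (Sum.inl : α → α ⊕ β))ᶜ = Set.range (Sum.inr : β → α ⊕ β) := by
    ext x; cases x <;> simp
  rw [← Summable.tsum_add_tsum_compl (s := Set.range (Sum.inl : α → α ⊕ β))
    ENNReal.summable ENNReal.summable]
  congr 1
  · exact ((Equiv.ofInjective _ Sum.inl_injective).tsum_eq _).symm
  · rw [hc]
    exact ((Equiv.ofInjective _ Sum.inr_injective).tsum_eq _).symm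

private lemma primitive_map_iff {α β : Type*} {f : α → β} (hf : Function.Injective f)
    (l : List α) : PrimitiveList (l.map f) ↔ PrimitiveList l := by
  constructor
  · intro h k r hr
    exact h k (r.map f) (by rw [hr, List.map_flatten, List.map_replicate])
  · intro h k r hr
    match k with
    | 0 =>
      have h0 : l.map f = [] := by simpa using hr
      have hl : l = [] := by cases l with | nil => rfl | cons a t => simp at h0
      exact h 0 [] (by simp [hl])
    | k' + 1 =>
      have hpre : r = List.map f (l.take r.length) := by
        rw [List.map_take, hr, List.replicate_succ, List.flatten_cons]
        exact (List.take_left).symm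
      have hmap : l.map f = ((List.replicate (k' + 1) (l.take r.length)).flatten).map f := by
        rw [List.map_flatten, List.map_replicate, ← hpre, ← hr]
      exact h (k' + 1) _ (List.map_injective_iff.2 hf hmap)

private lemma exists_map_of_mem {α β : Type*} {f : α → β} (l : List β)
    (h : ∀ x ∈ l, ∃ a, f a = x) : ∃ l' : List α, l = l'.map f := by
  induction l with
  | nil => exact ⟨[], rfl⟩
  | cons x t ih =>
    obtain ⟨a, ha⟩ := h x (List.mem_cons_self)
    obtain ⟨l', hl'⟩ := ih fun y hy => h y (List.mem_cons_of_mem x hy)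
    exact ⟨a :: l', by rw [List.map_cons, ha, ← hl']⟩

private lemma chain'_eq_head {α β : Type*} {R : α → α → Prop} (f : α → β)
    (hf : ∀ a b, R a b → f a = f b) :
    ∀ (l : List α), l.Chain' R → ∀ (h : l ≠ []) (x : α), x ∈ l → f x = f (l.head h)
  | [], _, h, _, _ => absurd rfl h
  | a :: t, hc, _, x, hx => by
    rcases List.mem_cons.1 hx with rfl | hx'
    · rfl
    · have hne : t ≠ [] := List.ne_nil_of_mem hx'
      have ht : t.Chain' R := (List.isChain_cons.1 hc).2
      have h1 : f x = f (t.head hne) := chain'_eq_head f hf t ht hne x hx'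
      have h2 : R a (t.head hne) := (List.isChain_cons.1 hc).1 _ (List.head?_eq_head hne)
      rw [List.head_cons, h1]
      exact (hf a _ h2).symm

variable {V : Type} [DecidableEq V]

private lemma altPath_ext {G H : EGraph V} {p q : AltPath G H} (h : p.edges = q.edges) :
    p = q := by
  cases p; cases q; simp only at h; subst h; rfl

/-- An injective, vertex-, weight- and color-compatible map of plugging edges. -/
private structure EdgeMap (G H G' H' : EGraph V) where
  φ : G.E ⊕ H.E → G'.E ⊕ H'.E
  inj : Function.Injective φ
  hsrc : ∀ e, psrc G' H' (φ e) = psrc G H e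
  htgt : ∀ e, ptgt G' H' (φ e) = ptgt G H e
  hw : ∀ e, pw G' H' (φ e) = pw G H e
  hcol : ∀ e f, (φ e).isLeft = (φ f).isLeft ↔ e.isLeft = f.isLeft

namespace EdgeMap

variable {G H G' H' : EGraph V} (m : EdgeMap G H G' H')

private def path (p : AltPath G H) : AltPath G' H' where
  edges := p.edges.map m.φ
  ne := by simpa using p.ne
  chain := by
    unfold List.Chain'
    rw [List.isChain_map]
    refine p.chain.imp fun a b hab => ?_
    exact ⟨by rw [m.htgt, m.hsrc]; exact hab.1, fun h => hab.2 ((m.hcol a b).1 h)⟩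

private lemma path_src (p : AltPath G H) : (m.path p).src = p.src := by
  show psrc G' H' ((p.edges.map m.φ).head (by simpa using p.ne)) = _
  rw [List.head_map]
  exact m.hsrc _

private lemma path_tgt (p : AltPath G H) : (m.path p).tgt = p.tgt := by
  show ptgt G' H' ((p.edges.map m.φ).getLast (by simpa using p.ne)) = _
  rw [List.getLast_map]
  exact m.htgt _

private lemma path_weight (p : AltPath G H) : (m.path p).weight = p.weight := by
  show ((p.edges.map m.φ).map (pw G' H')).prod = (p.edges.map (pw G H)).prod
  rw [List.map_map]
  exact congrArg List.prod (List.map_congr_left fun e _ => m.hw e)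

private lemma isCycle_iff (p : AltPath G H) : (m.path p).IsCycle ↔ p.IsCycle := by
  unfold AltPath.IsCycle
  rw [m.path_src, m.path_tgt]
  refine and_congr Iff.rfl (not_congr ?_)
  show ((p.edges.map m.φ).getLast (by simpa using p.ne)).isLeft = ((p.edges.map m.φ).head (by simpa using p.ne)).isLeft ↔ _
  rw [List.getLast_map, List.head_map]
  exact m.hcol _ _

private lemma isOneCycle_iff (p : AltPath G H) : (m.path p).IsOneCycle ↔ p.IsOneCycle := by
  unfold AltPath.IsOneCycle
  rw [m.isCycle_iff]
  refine and_congr Iff.rfl ?_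
  exact primitive_map_iff m.inj _

private def pathC (p : {p : AltPath G H // p.IsOneCycle}) : {p : AltPath G' H' // p.IsOneCycle} :=
  ⟨m.path p.1, (m.isOneCycle_iff p.1).2 p.2⟩

private def circ : Circ G H → Circ G' H' :=
  Quotient.map m.pathC (by
    rintro p q ⟨k, hk⟩
    refine ⟨k, ?_⟩
    show q.1.edges.map m.φ = (p.1.edges.map m.φ).rotate k
    rw [hk, List.map_rotate])

private lemma cweight_circ (c : Circ G H) : cweight (m.circ c) = cweight c := by
  induction c using Quotient.inductionOn with
  | _ p =>
    unfold circ
    rw [Quotient.map_mk]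
    show (m.pathC p).1.weight = p.1.weight
    exact m.path_weight p.1

private lemma circ_inj : Function.Injective m.circ := by
  intro c d
  refine Quotient.inductionOn₂ c d fun p q h => ?_
  unfold circ at h
  rw [Quotient.map_mk, Quotient.map_mk] at h
  obtain ⟨k, hk⟩ := Quotient.exact h
  refine Quotient.sound ⟨k, ?_⟩
  have hmk : q.1.edges.map m.φ = (p.1.edges.rotate k).map m.φ := by
    rw [List.map_rotate]; exact hk
  exact List.map_injective_iff.2 m.inj hmk

private lemma circ_surj_on (p : {p : AltPath G' H' // p.IsOneCycle})
    (hp : ∀ e ∈ p.1.edges, ∃ e', m.φ e' = e) :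
    ∃ c, m.circ c = Quotient.mk _ p := by
  obtain ⟨l, hl⟩ := exists_map_of_mem _ hp
  have hne : l ≠ [] := by rintro rfl; exact p.1.ne (by simpa using hl)
  have hchain : l.Chain' (fun e f => ptgt G H e = psrc G H f ∧ e.isLeft ≠ f.isLeft) := by
    have hch := p.1.chain
    unfold List.Chain' at hch ⊢
    rw [hl, List.isChain_map] at hch
    refine hch.imp fun a b hab => ?_
    exact ⟨by rw [← m.htgt, ← m.hsrc]; exact hab.1, fun h => hab.2 ((m.hcol a b).2 h)⟩
  have hpath : m.path ⟨l, hne, hchain⟩ = p.1 :=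
    altPath_ext (show (m.path ⟨l, hne, hchain⟩).edges = p.1.edges from hl.symm)
  have honec : (⟨l, hne, hchain⟩ : AltPath G H).IsOneCycle := by
    have hp2 := p.2
    rw [← hpath] at hp2
    exact (m.isOneCycle_iff _).1 hp2
  refine ⟨Quotient.mk _ ⟨⟨l, hne, hchain⟩, honec⟩, ?_⟩
  unfold circ
  rw [Quotient.map_mk]
  exact congrArg _ (Subtype.ext hpath)

end EdgeMap

/-- The measurement of two graphs with disjoint vertex sets vanishes. -/
private lemma meas_empty (G H : EGraph V) (hd : ∀ v, v ∈ G.verts → v ∈ H.verts → False) :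
    meas G H = 0 := by
  have h1 : IsEmpty {p : AltPath G H // p.IsOneCycle} := by
    constructor
    rintro ⟨⟨edges, ne, chain⟩, hcyc, -⟩
    obtain ⟨-, hc2⟩ := hcyc
    match edges, ne, chain, hc2 with
    | [], ne, _, _ => exact ne rfl
    | [e], _, _, hc2 => simp at hc2
    | e :: f :: t, _, chain, _ =>
      obtain ⟨⟨h1', h2'⟩, -⟩ := List.isChain_cons_cons.1 chain
      simp only [ptgt, psrc, Sum.elim_inl, Sum.elim_inr] at h1'
      rcases e with a | c <;> rcases f with a' | c'
      · exact h2' rfl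
      · simp only [Sum.elim_inl, Sum.elim_inr] at h1'
        exact hd _ (h1' ▸ G.tgt_mem a) (H.src_mem c')
      · simp only [Sum.elim_inl, Sum.elim_inr] at h1'
        exact hd _ (G.src_mem a') (h1' ▸ H.tgt_mem c)
      · exact h2' rfl
  haveI : IsEmpty (Circ G H) := ⟨fun c => Quotient.inductionOn c fun p => h1.elim p⟩
  show (∑' c : Circ G H, mval (cweight c)) = 0
  exact tsum_empty

private def swapEM (G H : EGraph V) : EdgeMap G H H G where
  φ := Sum.swap
  inj := fun a b h => by simpa using congrArg Sum.swap h
  hsrc := by rintro (e | e) <;> rfl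
  htgt := by rintro (e | e) <;> rfl
  hw := by rintro (e | e) <;> rfl
  hcol := by rintro (e | e) (f | f) <;> simp

private lemma meas_comm (G H : EGraph V) : meas G H = meas H G := by
  have key : ∀ (G H : EGraph V) (c : Circ G H),
      (swapEM H G).circ ((swapEM G H).circ c) = c := by
    intro G H c
    induction c using Quotient.inductionOn with
    | _ p =>
      unfold EdgeMap.circ
      rw [Quotient.map_mk, Quotient.map_mk]
      refine congrArg _ (Subtype.ext (altPath_ext ?_))
      show (p.1.edges.map Sum.swap).map Sum.swap = p.1.edges
      rw [List.map_map]
      simp [Function.comp_def]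
  let e : Circ G H ≃ Circ H G :=
    ⟨(swapEM G H).circ, (swapEM H G).circ, key G H, key H G⟩
  have ht := e.tsum_eq (fun c => mval (cweight c))
  show (∑' c : Circ G H, mval (cweight c)) = ∑' c : Circ H G, mval (cweight c)
  rw [← ht]
  exact tsum_congr fun c => (congrArg mval ((swapEM G H).cweight_circ c)).symm

/-- Left inclusion of pluggings into the plugging of unions. -/
private def unionL (G₁ G₂ H₁ H₂ : EGraph V) : EdgeMap G₁ H₁ (union G₁ G₂) (union H₁ H₂) where
  φ := Sum.map Sum.inl Sum.inl
  inj := Sum.map_injective.2 ⟨Sum.inl_injective, Sum.inl_injective⟩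
  hsrc := by rintro (e | e) <;> rfl
  htgt := by rintro (e | e) <;> rfl
  hw := by rintro (e | e) <;> rfl
  hcol := by rintro (e | e) (f | f) <;> exact Iff.rfl

/-- Right inclusion of pluggings into the plugging of unions. -/
private def unionR (G₁ G₂ H₁ H₂ : EGraph V) : EdgeMap G₂ H₂ (union G₁ G₂) (union H₁ H₂) where
  φ := Sum.map Sum.inr Sum.inr
  inj := Sum.map_injective.2 ⟨Sum.inr_injective, Sum.inr_injective⟩
  hsrc := by rintro (e | e) <;> rfl
  htgt := by rintro (e | e) <;> rfl
  hw := by rintro (e | e) <;> rfl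
  hcol := by rintro (e | e) (f | f) <;> exact Iff.rfl

/-- The side (in `G₁,H₁` or in `G₂,H₂`) of an edge of the plugging of unions. -/
private def uside {G₁ G₂ H₁ H₂ : EGraph V} :
    (union G₁ G₂).E ⊕ (union H₁ H₂).E → Bool
  | .inl (.inl _) => true
  | .inl (.inr _) => false
  | .inr (.inl _) => true
  | .inr (.inr _) => false

private lemma meas_union (G₁ G₂ H₁ H₂ : EGraph V)
    (hH₁ : H₁.verts = G₁.verts) (hH₂ : H₂.verts = G₂.verts)
    (hd : ∀ v, v ∈ G₁.verts → v ∈ G₂.verts → False) :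
    meas (union G₁ G₂) (union H₁ H₂) = meas G₁ H₁ + meas G₂ H₂ := by
  set GU := union G₁ G₂ with hGU
  set HU := union H₁ H₂ with hHU
  have hmem1 : ∀ e : GU.E ⊕ HU.E, uside e = true →
      ptgt GU HU e ∈ G₁.verts ∧ psrc GU HU e ∈ G₁.verts := by
    rintro ((g | g) | (h | h)) hu
    · exact ⟨G₁.tgt_mem g, G₁.src_mem g⟩
    · exact absurd hu Bool.false_ne_true
    · exact ⟨hH₁ ▸ H₁.tgt_mem h, hH₁ ▸ H₁.src_mem h⟩
    · exact absurd hu Bool.false_ne_true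
  have hmem2 : ∀ e : GU.E ⊕ HU.E, uside e = false →
      ptgt GU HU e ∈ G₂.verts ∧ psrc GU HU e ∈ G₂.verts := by
    rintro ((g | g) | (h | h)) hu
    · exact absurd hu.symm Bool.false_ne_true
    · exact ⟨G₂.tgt_mem g, G₂.src_mem g⟩
    · exact absurd hu.symm Bool.false_ne_true
    · exact ⟨hH₂ ▸ H₂.tgt_mem h, hH₂ ▸ H₂.src_mem h⟩
  have hrel : ∀ e f : GU.E ⊕ HU.E,
      (ptgt GU HU e = psrc GU HU f ∧ e.isLeft ≠ f.isLeft) → uside e = uside f := by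
    intro e f h
    cases hue : uside e <;> cases huf : uside f
    · rfl
    · exfalso
      have he := (hmem2 e hue).1
      rw [h.1] at he
      exact hd _ (hmem1 f huf).2 he
    · exfalso
      have he := (hmem1 e hue).1
      rw [h.1] at he
      exact hd _ he (hmem2 f huf).2
    · rfl
  have hconst : ∀ (p : AltPath GU HU) (e : GU.E ⊕ HU.E), e ∈ p.edges →
      uside e = uside (p.edges.head p.ne) :=
    fun p e he => chain'_eq_head uside hrel p.edges p.chain p.ne e he
  have hside₁ : ∀ e, uside ((unionL G₁ G₂ H₁ H₂).φ e) = true := by rintro (e | e) <;> rfl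
  have hside₂ : ∀ e, uside ((unionR G₁ G₂ H₁ H₂).φ e) = false := by rintro (e | e) <;> rfl
  have hmixed : ∀ (x : {p : AltPath G₁ H₁ // p.IsOneCycle})
      (y : {p : AltPath G₂ H₂ // p.IsOneCycle}),
      (unionL G₁ G₂ H₁ H₂).circ (Quotient.mk _ x) ≠
        (unionR G₁ G₂ H₁ H₂).circ (Quotient.mk _ y) := by
    intro x y h
    unfold EdgeMap.circ at h
    rw [Quotient.map_mk, Quotient.map_mk] at h
    obtain ⟨k, hk⟩ := Quotient.exact h
    obtain ⟨z, hz⟩ := List.exists_mem_of_ne_nil _ ((unionR G₁ G₂ H₁ H₂).pathC y).1.ne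
    have hzc := hz
    rw [hk, List.mem_rotate] at hzc
    have hz1 : uside z = false := by
      obtain ⟨w, -, hw⟩ := List.mem_map.1 hz
      rw [← hw]; exact hside₂ w
    have hz2 : uside z = true := by
      obtain ⟨w, -, hw⟩ := List.mem_map.1 hzc
      rw [← hw]; exact hside₁ w
    rw [hz1] at hz2
    exact Bool.false_ne_true hz2
  have hinj : Function.Injective
      (Sum.elim (unionL G₁ G₂ H₁ H₂).circ (unionR G₁ G₂ H₁ H₂).circ) := by
    rintro (x | x) (y | y) h
    · exact congrArg Sum.inl ((unionL G₁ G₂ H₁ H₂).circ_inj h)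
    · exfalso
      revert h
      refine Quotient.inductionOn₂ x y fun p q h => ?_
      exact hmixed p q h
    · exfalso
      revert h
      refine Quotient.inductionOn₂ x y fun p q h => ?_
      exact hmixed q p h.symm
    · exact congrArg Sum.inr ((unionR G₁ G₂ H₁ H₂).circ_inj h)
  have hsurj : Function.Surjective
      (Sum.elim (unionL G₁ G₂ H₁ H₂).circ (unionR G₁ G₂ H₁ H₂).circ) := by
    intro c
    induction c using Quotient.inductionOn with
    | _ p =>
      cases hs : uside (p.1.edges.head p.1.ne) with
      | true =>
        have hall : ∀ e ∈ p.1.edges, ∃ e', (unionL G₁ G₂ H₁ H₂).φ e' = e := by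
          intro e he
          have hue : uside e = true := (hconst p.1 e he).trans hs
          rcases e with (g | g) | (h | h)
          · exact ⟨Sum.inl g, rfl⟩
          · simp [uside] at hue
          · exact ⟨Sum.inr h, rfl⟩
          · simp [uside] at hue
        obtain ⟨c, hc⟩ := (unionL G₁ G₂ H₁ H₂).circ_surj_on p hall
        exact ⟨Sum.inl c, hc⟩
      | false =>
        have hall : ∀ e ∈ p.1.edges, ∃ e', (unionR G₁ G₂ H₁ H₂).φ e' = e := by
          intro e he
          have hue : uside e = false := (hconst p.1 e he).trans hs
          rcases e with (g | g) | (h | h)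
          · simp [uside] at hue
          · exact ⟨Sum.inl g, rfl⟩
          · simp [uside] at hue
          · exact ⟨Sum.inr h, rfl⟩
        obtain ⟨c, hc⟩ := (unionR G₁ G₂ H₁ H₂).circ_surj_on p hall
        exact ⟨Sum.inr c, hc⟩
  let e := Equiv.ofBijective _ ⟨hinj, hsurj⟩
  have ht := e.tsum_eq (fun c => mval (cweight c))
  show (∑' c : Circ GU HU, mval (cweight c)) =
    (∑' c : Circ G₁ H₁, mval (cweight c)) + ∑' c : Circ G₂ H₂, mval (cweight c)
  rw [← ht, tsum_sum_type']
  congr 1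
  · exact tsum_congr fun x => congrArg mval ((unionL G₁ G₂ H₁ H₂).cweight_circ x)
  · exact tsum_congr fun x => congrArg mval ((unionR G₁ G₂ H₁ H₂).cweight_circ x)

private lemma pmeas_comm (p q : Project V) : pmeas p q = pmeas q p := by
  unfold Project.pmeas
  rw [meas_comm]
  ring

private lemma orth_symm {p q : Project V} (h : orth p q) : orth q p := by
  unfold Project.orth at h ⊢
  rw [pmeas_comm q p]
  exact h

private lemma mix_orth {X Y : Finset V} (hXY : X ∩ Y = ∅) {a b c d : Project V}
    (hab : orth a b) (hcd : orth c d)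
    (ha : a.carrier = X) (hb : b.carrier = X) (hc : c.carrier = Y) (hd : d.carrier = Y) :
    orth (a.tensor c) (b.tensor d) := by
  have hdisj : ∀ {p q : Project V}, p.carrier = X → q.carrier = Y →
      ∀ v, v ∈ p.graph.verts → v ∈ q.graph.verts → False := by
    intro p q hp hq v h1 h2
    have h1' : v ∈ X := by rw [← hp]; exact h1
    have h2' : v ∈ Y := by rw [← hq]; exact h2
    have : v ∈ X ∩ Y := Finset.mem_inter.2 ⟨h1', h2'⟩
    rw [hXY] at this
    exact absurd this (Finset.notMem_empty v)
  have hzero1 : meas a.graph c.graph = 0 := meas_empty _ _ (hdisj ha hc)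
  have hzero2 : meas b.graph d.graph = 0 := meas_empty _ _ (hdisj hb hd)
  have hU : meas (union a.graph c.graph) (union b.graph d.graph)
      = meas a.graph b.graph + meas c.graph d.graph :=
    meas_union a.graph c.graph b.graph d.graph (hb.trans ha.symm) (hd.trans hc.symm)
      (hdisj ha hc)
  have key : pmeas (a.tensor c) (b.tensor d) = pmeas a b + pmeas c d := by
    show a.wager + c.wager + meas a.graph c.graph + (b.wager + d.wager + meas b.graph d.graph)
        + meas (union a.graph c.graph) (union b.graph d.graph)
      = a.wager + b.wager + meas a.graph b.graph + (c.wager + d.wager + meas c.graph d.graph)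
    rw [hzero1, hzero2, hU]
    ring
  constructor
  · rw [key]
    intro h
    rw [add_eq_zero] at h
    exact hab.1 h.1
  · rw [key]
    exact ENNReal.add_ne_top.2 ⟨hab.2, hcd.2⟩

end MixAux

/-- The Mix rule: if `a ⊥ b` and `c ⊥ d` with the carrier of `a` (= that of `b`)
disjoint from the carrier of `c` (= that of `d`), then `a ⊗ c ⊥ b ⊗ d`.
Consequently `A ⊗ B ⊆ A ⅋ B = (A^⊥ ⊗ B^⊥)^⊥` for conducts `A`, `B` of disjoint
carriers. -/
theorem stmt10 {V : Type} [DecidableEq V] (X Y : Finset V) (hXY : X ∩ Y = ∅)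
    (A B : Set (Project V)) (hA : IsConduct X A) (hB : IsConduct Y B) :
    (∀ a b c d : Project V, orth a b → orth c d →
      a.carrier = X → b.carrier = X → c.carrier = Y → d.carrier = Y →
      orth (a.tensor c) (b.tensor d)) ∧
    tensConduct X Y A B ⊆ perpOn (X ∪ Y) (tensConduct X Y (perpOn X A) (perpOn Y B)) := by
  have mix : ∀ a b c d : Project V, orth a b → orth c d →
      a.carrier = X → b.carrier = X → c.carrier = Y → d.carrier = Y →
      orth (a.tensor c) (b.tensor d) :=
    fun a b c d hab hcd ha hb hc hd => mix_orth hXY hab hcd ha hb hc hd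
  refine ⟨mix, ?_⟩
  intro p hp
  obtain ⟨hpcar, hporth⟩ := hp
  have hsub : setTens (perpOn X A) (perpOn Y B) ⊆ perpOn (X ∪ Y) (setTens A B) := by
    rintro r ⟨a', ⟨ha'c, ha'⟩, b', ⟨hb'c, hb'⟩, rfl⟩
    refine ⟨?_, ?_⟩
    · show a'.graph.verts ∪ b'.graph.verts = X ∪ Y
      rw [show a'.graph.verts = X from ha'c, show b'.graph.verts = Y from hb'c]
    · rintro s ⟨a, haA, b, hbB, rfl⟩
      exact mix a a' b b' (ha' a haA) (hb' b hbB) (hA.carrier_eq a haA) ha'c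
        (hB.carrier_eq b hbB) hb'c
  have hpmem : p ∈ perpOn (X ∪ Y) (setTens (perpOn X A) (perpOn Y B)) :=
    ⟨hpcar, fun r hr => hporth r (hsub hr)⟩
  refine ⟨hpcar, fun q hq => ?_⟩
  obtain ⟨hqcar, hq2⟩ := hq
  exact orth_symm (hq2 p hpmem)
end
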